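/- Let 1 < p ≤ 2. There is a constant C = C(n,p) such that for all nonzero vectors A, B ∈ ℝⁿ: |A − B|^p ≤ C·( | |A|^((p−2)/2) A − |B|^((p−2)/2) B |² + | |A|^((p−2)/2) A − |B|^((p−2)/2) B |^p · |A|^((2−p)p/2) ). -/

import Mathlib

open Real

lemma bern_aux (s : ℝ) (hs0 : 0 ≤ s) (hs1 : s ≤ 1) {a b : ℝ} (ha : 0 < a) (hab : a ≤ b) :
    b ^ s ≤ a ^ s + s * a ^ s * ((b - a) / a) := by
  have hb : 0 < b := ha.trans_le hab
  have h1 : b ^ s = a ^ s * (b / a) ^ s := by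
    rw [← Real.mul_rpow ha.le (by positivity)]
    congr 1
    field_simp
  have h2 : (b / a : ℝ) = 1 + (b - a) / a := by field_simp; ring
  have h3 : (1 + (b - a) / a) ^ s ≤ 1 + s * ((b - a) / a) := by
    apply rpow_one_add_le_one_add_mul_self ?_ hs0 hs1
    have : (0:ℝ) ≤ (b - a) / a := div_nonneg (by linarith) ha.le
    linarith
  have h4 : (0:ℝ) ≤ a ^ s := Real.rpow_nonneg ha.le s
  rw [h1, h2]
  nlinarith [mul_le_mul_of_nonneg_left h3 h4]

lemma key_aux (s : ℝ) (hs0 : 0 ≤ s) (hs1 : s ≤ 1) {a b : ℝ} (ha : 0 < a) (hb : 0 < b) :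
    |a ^ (-s) - b ^ (-s)| ≤ s * |a - b| * (min a b) ^ (-(1 + s)) := by
  wlog hab : a ≤ b generalizing a b
  · rw [abs_sub_comm, abs_sub_comm a b, min_comm]
    exact this hb ha (le_of_not_ge hab)
  have hv' : b ^ (-s) ≤ a ^ (-s) :=
    Real.rpow_le_rpow_of_nonpos ha hab (neg_nonpos.mpr hs0)
  rw [min_eq_left hab, abs_of_nonneg (by linarith), abs_of_nonpos (by linarith), neg_sub]
  have hu : (0:ℝ) < a ^ s := Real.rpow_pos_of_pos ha s
  have hv : (0:ℝ) < b ^ s := Real.rpow_pos_of_pos hb s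
  have huv : a ^ s ≤ b ^ s := Real.rpow_le_rpow ha.le hab hs0
  have hbern := bern_aux s hs0 hs1 ha hab
  have e1 : a ^ (-s) = (a ^ s)⁻¹ := Real.rpow_neg ha.le s
  have e2 : b ^ (-s) = (b ^ s)⁻¹ := Real.rpow_neg hb.le s
  have e3 : a ^ (-(1 + s)) = a⁻¹ * (a ^ s)⁻¹ := by
    rw [show -(1 + s) = (-1) + (-s) by ring, Real.rpow_add ha, Real.rpow_neg_one,
      Real.rpow_neg ha.le]
  rw [e1, e2, e3]
  have habs : (a ^ s)⁻¹ - (b ^ s)⁻¹ = (b ^ s - a ^ s) / (a ^ s * b ^ s) := by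
    field_simp
  rw [habs]
  calc (b ^ s - a ^ s) / (a ^ s * b ^ s)
      ≤ (s * a ^ s * ((b - a) / a)) / (a ^ s * b ^ s) := by
        gcongr
        linarith
    _ = s * (b - a) / (a * b ^ s) := by field_simp
    _ ≤ s * (b - a) / (a * a ^ s) := by
        gcongr
    _ = s * (b - a) * (a⁻¹ * (a ^ s)⁻¹) := by field_simp

set_option maxHeartbeats 4000000 in
/-- Elementary vector inequality for the singular range 1 < p ≤ 2,
    with V(A) = |A|^((p−2)/2) A. -/
theorem p_le_two_vector_inequality (n : ℕ) (p : ℝ) (hp1 : 1 < p) (hp2 : p ≤ 2) :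
    ∃ C : ℝ, 0 < C ∧
      ∀ A B : EuclideanSpace ℝ (Fin n), A ≠ 0 → B ≠ 0 →
        ‖A - B‖ ^ p ≤
          C * (‖(‖A‖ ^ ((p - 2) / 2)) • A - (‖B‖ ^ ((p - 2) / 2)) • B‖ ^ (2:ℝ) +
            ‖(‖A‖ ^ ((p - 2) / 2)) • A - (‖B‖ ^ ((p - 2) / 2)) • B‖ ^ p *
              ‖A‖ ^ ((2 - p) * p / 2)) := by
  have hp0 : (0:ℝ) < p := by linarith
  refine ⟨300, by norm_num, ?_⟩
  intro A B hA hB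
  have ha : (0:ℝ) < ‖A‖ := norm_pos_iff.mpr hA
  have hb : (0:ℝ) < ‖B‖ := norm_pos_iff.mpr hB
  set a : ℝ := ‖A‖ with ha_def
  set b : ℝ := ‖B‖ with hb_def
  set s : ℝ := (2 - p) / 2 with hs_def
  have hs0 : 0 ≤ s := by rw [hs_def]; linarith
  have hs_half : s ≤ 1 / 2 := by rw [hs_def]; linarith
  have hexp : (p - 2) / 2 = -s := by rw [hs_def]; ring
  have hps : p = 2 - 2 * s := by rw [hs_def]; ring
  have hspnn : 0 ≤ s * p := by rw [hs_def]; nlinarith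
  have hsp1 : s * p ≤ 1 := by rw [hs_def]; nlinarith [sq_nonneg (p - 1)]
  rw [hexp, show (2 - p) * p / 2 = s * p by rw [hs_def]; ring]
  set D : ℝ := ‖(a ^ (-s)) • A - (b ^ (-s)) • B‖ with hD_def
  set d : ℝ := ‖A - B‖ with hd_def
  have hdnn : 0 ≤ d := norm_nonneg _
  have hDnn : 0 ≤ D := norm_nonneg _
  set M : ℝ := max a b with hM_def
  set m : ℝ := min a b with hm_def
  have hM : 0 < M := lt_of_lt_of_le ha (le_max_left a b)
  have hm : 0 < m := lt_min ha hb
  have hMm : M - m = |a - b| := by rw [abs_sub_comm]; exact max_sub_min_eq_abs a b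
  have haM : a ≤ M := le_max_left a b
  have hbM : b ≤ M := le_max_right a b
  have hma : m ≤ a := min_le_left a b
  have h_tri : |a - b| ≤ d := abs_norm_sub_norm_le A B
  have hd_ab : d ≤ a + b := norm_sub_le A B
  have hVA : ‖(a ^ (-s)) • A‖ = a ^ (1 - s) := by
    rw [norm_smul, Real.norm_eq_abs, abs_of_nonneg (Real.rpow_nonneg ha.le _),
      show (1:ℝ) - s = -s + 1 by ring, Real.rpow_add ha, Real.rpow_one]
  have hVB : ‖(b ^ (-s)) • B‖ = b ^ (1 - s) := by
    rw [norm_smul, Real.norm_eq_abs, abs_of_nonneg (Real.rpow_nonneg hb.le _),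
      show (1:ℝ) - s = -s + 1 by ring, Real.rpow_add hb, Real.rpow_one]
  have hterm2 : 0 ≤ D ^ p * a ^ (s * p) := by positivity
  by_cases hcase : |a - b| ≤ M / 4
  · -- Case B : comparable norms
    have hmM : (3 / 4) * M ≤ m := by linarith
    have haM34 : (3 / 4) * M ≤ a := le_trans hmM hma
    -- decomposition
    have hdecomp : (a ^ (-s)) • A - (b ^ (-s)) • B
        = (a ^ (-s)) • (A - B) + (a ^ (-s) - b ^ (-s)) • B := by
      rw [smul_sub, sub_smul]; abel
    have hD1 : a ^ (-s) * d - |a ^ (-s) - b ^ (-s)| * b ≤ D := by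
      have h := norm_le_add_norm_add ((a ^ (-s)) • (A - B)) ((a ^ (-s) - b ^ (-s)) • B)
      rw [← hdecomp] at h
      rw [norm_smul, norm_smul, Real.norm_eq_abs, Real.norm_eq_abs,
        abs_of_nonneg (Real.rpow_nonneg ha.le _)] at h
      rw [hD_def]
      linarith
    have hMexp : M ^ (-(1 + s)) * M = M ^ (-s) := by
      rw [show -(1 + s) = -s + (-1) by ring, Real.rpow_add hM, Real.rpow_neg_one]
      field_simp
    have h154 : ((3:ℝ) / 4) ^ (-(1 + s)) ≤ 1.54 := by
      have h1 : ((3:ℝ) / 4) ^ (-(1 + s)) ≤ ((3:ℝ) / 4) ^ (-(3 / 2 : ℝ)) :=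
        Real.rpow_le_rpow_of_exponent_ge (by norm_num) (by norm_num) (by linarith)
      have h2 : ((3:ℝ) / 4) ^ (-(3 / 2 : ℝ)) * ((3:ℝ) / 4) ^ (-(3 / 2 : ℝ))
          = ((3:ℝ) / 4) ^ (-(3:ℝ)) := by
        rw [← Real.rpow_add (by norm_num)]; norm_num
      have h3 : ((3:ℝ) / 4) ^ (-(3:ℝ)) = 64 / 27 := by
        rw [Real.rpow_neg (by norm_num), show ((3:ℝ)) = ((3:ℕ):ℝ) by norm_num,
          Real.rpow_natCast]
        norm_num
      have h4 : (0:ℝ) ≤ ((3:ℝ) / 4) ^ (-(3 / 2 : ℝ)) := Real.rpow_nonneg (by norm_num) _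
      nlinarith
    have hm_lb : m ^ (-(1 + s)) ≤ 1.54 * M ^ (-(1 + s)) := by
      have h1 : m ^ (-(1 + s)) ≤ ((3 / 4) * M) ^ (-(1 + s)) :=
        Real.rpow_le_rpow_of_nonpos (by positivity) hmM (by linarith)
      have h2 : (((3:ℝ) / 4) * M) ^ (-(1 + s)) = ((3:ℝ)/4) ^ (-(1 + s)) * M ^ (-(1 + s)) :=
        Real.mul_rpow (by norm_num) hM.le
      have h3 : (0:ℝ) ≤ M ^ (-(1 + s)) := Real.rpow_nonneg hM.le _
      rw [h2] at h1
      exact h1.trans (mul_le_mul_of_nonneg_right h154 h3)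
    have hkey := key_aux s hs0 (by linarith) ha hb
    have S1 : |a ^ (-s) - b ^ (-s)| * b ≤ (4 / 5) * (d * M ^ (-s)) := by
      have c1 : |a ^ (-s) - b ^ (-s)| * b ≤ (s * |a - b| * m ^ (-(1 + s))) * M := by
        apply mul_le_mul hkey hbM hb.le
        have : (0:ℝ) ≤ m ^ (-(1+s)) := Real.rpow_nonneg hm.le _
        positivity
      have c2 : (s * |a - b| * m ^ (-(1 + s))) * M
          ≤ ((1 / 2) * d * (1.54 * M ^ (-(1 + s)))) * M := by
        apply mul_le_mul_of_nonneg_right ?_ hM.le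
        apply mul_le_mul ?_ hm_lb (Real.rpow_nonneg hm.le _)
          (mul_nonneg (by norm_num) hdnn)
        exact mul_le_mul hs_half h_tri (abs_nonneg _) (by norm_num)
      have c3 : ((1 / 2) * d * (1.54 * M ^ (-(1 + s)))) * M
          = 0.77 * (d * (M ^ (-(1 + s)) * M)) := by ring
      rw [c3, hMexp] at c2
      have c4 : (0:ℝ) ≤ d * M ^ (-s) := mul_nonneg hdnn (Real.rpow_nonneg hM.le _)
      linarith
    have S2 : d * M ^ (-s) ≤ a ^ (-s) * d := by
      rw [mul_comm]
      exact mul_le_mul_of_nonneg_right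
        (Real.rpow_le_rpow_of_nonpos ha haM (neg_nonpos.mpr hs0)) hdnn
    have hD_lb : (1 / 5) * (d * M ^ (-s)) ≤ D := by linarith
    -- deduce d ≤ 5 * D * M ^ s
    have hMs : (0:ℝ) ≤ M ^ s := Real.rpow_nonneg hM.le s
    have hcancel : M ^ (-s) * M ^ s = 1 := by
      rw [← Real.rpow_add hM]; norm_num
    have hd5 : d ≤ 5 * D * M ^ s := by
      have := mul_le_mul_of_nonneg_right hD_lb hMs
      calc d = (1/5) * (d * M ^ (-s)) * M ^ s * 5 := by
            rw [show (1:ℝ)/5 * (d * M ^ (-s)) * M ^ s * 5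
              = d * (M ^ (-s) * M ^ s) by ring, hcancel, mul_one]
        _ ≤ D * M ^ s * 5 := by nlinarith
        _ = 5 * D * M ^ s := by ring
    have hstep : d ^ p ≤ 25 * (D ^ p * (M ^ s) ^ p) := by
      have h1 : d ^ p ≤ (5 * D * M ^ s) ^ p := Real.rpow_le_rpow hdnn hd5 hp0.le
      have h2 : ((5:ℝ) * D * M ^ s) ^ p = 5 ^ p * D ^ p * (M ^ s) ^ p := by
        rw [Real.mul_rpow (by positivity) hMs, Real.mul_rpow (by norm_num) hDnn]
      have h3 : (5:ℝ) ^ p ≤ 25 := by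
        have := Real.rpow_le_rpow_of_exponent_le (by norm_num : (1:ℝ) ≤ 5) hp2
        rwa [show ((5:ℝ) ^ (2:ℝ)) = 25 by
          rw [show (2:ℝ) = ((2:ℕ):ℝ) by norm_num, Real.rpow_natCast]; norm_num] at this
      have h4 : (0:ℝ) ≤ D ^ p * (M ^ s) ^ p :=
        mul_nonneg (Real.rpow_nonneg hDnn _) (Real.rpow_nonneg hMs _)
      have h5 := mul_le_mul_of_nonneg_right h3 h4
      rw [h2] at h1
      nlinarith
    have hMsp : (M ^ s) ^ p ≤ (4 / 3) * a ^ (s * p) := by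
      rw [← Real.rpow_mul hM.le]
      have h1 : M ^ (s * p) ≤ ((4 / 3) * a) ^ (s * p) :=
        Real.rpow_le_rpow hM.le (by linarith) hspnn
      have h2 : (((4:ℝ) / 3) * a) ^ (s * p) = ((4:ℝ)/3) ^ (s * p) * a ^ (s * p) :=
        Real.mul_rpow (by norm_num) ha.le
      have h3 : ((4:ℝ)/3) ^ (s * p) ≤ 4 / 3 := by
        have := Real.rpow_le_rpow_of_exponent_le (by norm_num : (1:ℝ) ≤ 4/3) hsp1
        rwa [Real.rpow_one] at this
      have h4 : (0:ℝ) ≤ a ^ (s * p) := Real.rpow_nonneg ha.le _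
      nlinarith
    have hfin : d ^ p ≤ 34 * (D ^ p * a ^ (s * p)) := by
      have h5 : (0:ℝ) ≤ D ^ p := Real.rpow_nonneg hDnn _
      have h6 := mul_le_mul_of_nonneg_left hMsp h5
      nlinarith
    have hD2 : (0:ℝ) ≤ D ^ (2:ℝ) := Real.rpow_nonneg hDnn _
    linarith
  · -- Case A : very different norms
    rw [not_le] at hcase
    have hm34 : m ≤ (3 / 4) * M := by linarith
    have h1s : (0:ℝ) ≤ 1 - s := by linarith
    have hD_lb0 : |a ^ (1 - s) - b ^ (1 - s)| ≤ D := by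
      have h := abs_norm_sub_norm_le ((a ^ (-s)) • A) ((b ^ (-s)) • B)
      rwa [hVA, hVB] at h
    have hM1 : M ^ (1 - s) - m ^ (1 - s) ≤ D := by
      rcases le_total a b with h | h
      · rw [hM_def, hm_def, max_eq_right h, min_eq_left h]
        have hmono : a ^ (1 - s) ≤ b ^ (1 - s) := Real.rpow_le_rpow ha.le h h1s
        calc b ^ (1 - s) - a ^ (1 - s) ≤ |a ^ (1 - s) - b ^ (1 - s)| := by
              rw [abs_sub_comm]; exact le_abs_self _
          _ ≤ D := hD_lb0
      · rw [hM_def, hm_def, max_eq_left h, min_eq_right h]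
        have hmono : b ^ (1 - s) ≤ a ^ (1 - s) := Real.rpow_le_rpow hb.le h h1s
        calc a ^ (1 - s) - b ^ (1 - s) ≤ |a ^ (1 - s) - b ^ (1 - s)| := le_abs_self _
          _ ≤ D := hD_lb0
    have h87 : ((3:ℝ) / 4) ^ (1 - s) ≤ 0.87 := by
      have h1 : ((3:ℝ) / 4) ^ (1 - s) ≤ ((3:ℝ) / 4) ^ ((1:ℝ) / 2) :=
        Real.rpow_le_rpow_of_exponent_ge (by norm_num) (by norm_num) (by linarith)
      have h2 : ((3:ℝ) / 4) ^ ((1:ℝ) / 2) * ((3:ℝ) / 4) ^ ((1:ℝ) / 2) = 3 / 4 := by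
        rw [← Real.rpow_add (by norm_num)]; norm_num
      have h4 : (0:ℝ) ≤ ((3:ℝ) / 4) ^ ((1:ℝ) / 2) := Real.rpow_nonneg (by norm_num) _
      nlinarith
    have hm87 : m ^ (1 - s) ≤ 0.87 * M ^ (1 - s) := by
      have h1 : m ^ (1 - s) ≤ ((3 / 4) * M) ^ (1 - s) :=
        Real.rpow_le_rpow hm.le hm34 h1s
      have h2 : (((3:ℝ) / 4) * M) ^ (1 - s) = ((3:ℝ)/4) ^ (1 - s) * M ^ (1 - s) :=
        Real.mul_rpow (by norm_num) hM.le
      have h3 : (0:ℝ) ≤ M ^ (1 - s) := Real.rpow_nonneg hM.le _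
      rw [h2] at h1
      exact h1.trans (mul_le_mul_of_nonneg_right h87 h3)
    have hDlb : 0.13 * M ^ (1 - s) ≤ D := by linarith
    have hdp : d ^ p ≤ 4 * (M ^ (1 - s)) ^ (2:ℝ) := by
      have h1 : d ^ p ≤ (2 * M) ^ p :=
        Real.rpow_le_rpow hdnn (by linarith) hp0.le
      have h2 : ((2:ℝ) * M) ^ p = 2 ^ p * M ^ p := Real.mul_rpow (by norm_num) hM.le
      have h3 : (2:ℝ) ^ p ≤ 4 := by
        have := Real.rpow_le_rpow_of_exponent_le (by norm_num : (1:ℝ) ≤ 2) hp2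
        rwa [show ((2:ℝ) ^ (2:ℝ)) = 4 by
          rw [show (2:ℝ) = ((2:ℕ):ℝ) by norm_num, Real.rpow_natCast]; norm_num] at this
      have h4 : M ^ p = (M ^ (1 - s)) ^ (2:ℝ) := by
        rw [← Real.rpow_mul hM.le, show (1 - s) * 2 = p by rw [hps]; ring]
      have h5 : (0:ℝ) ≤ M ^ p := Real.rpow_nonneg hM.le _
      have h6 := mul_le_mul_of_nonneg_right h3 h5
      rw [h2] at h1
      rw [← h4]
      linarith
    have hD2 : (0.13:ℝ) ^ (2:ℝ) * (M ^ (1 - s)) ^ (2:ℝ) ≤ D ^ (2:ℝ) := by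
      have h1 : (0.13 * M ^ (1 - s)) ^ (2:ℝ) ≤ D ^ (2:ℝ) :=
        Real.rpow_le_rpow (by positivity) hDlb (by norm_num)
      rwa [Real.mul_rpow (by norm_num) (Real.rpow_nonneg hM.le _)] at h1
    have h013 : ((0.13:ℝ)) ^ (2:ℝ) = 0.0169 := by
      rw [show (2:ℝ) = ((2:ℕ):ℝ) by norm_num, Real.rpow_natCast]; norm_num
    rw [h013] at hD2
    have hY : (0:ℝ) ≤ (M ^ (1 - s)) ^ (2:ℝ) := Real.rpow_nonneg (Real.rpow_nonneg hM.le _) _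
    linarith
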